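/- Let α, β > 0 and let u₁, u₂ be twice continuously differentiable nonnegative solutions on (0,∞) of u'' = (αβ/2) u + u(u²−1)/r² with lim_{r→0} u_i(r) = 1, lim_{r→∞} u_i(r) = 0, and finite energy I(u_i) = ∫₀^∞ [2 u_i'² + (1−u_i²)²/r² + αβ u_i²] dr < ∞ for i = 1,2. Then u₁ = u₂ on (0,∞). In particular, the energy I has a unique minimizer subject to these boundary conditions. -/

import Mathlib

open MeasureTheory Filter Set Topology

noncomputable section

/-- `g` is absolutely continuous on every compact subinterval of `(0,∞)`,
with almost-everywhere derivative `g'`. -/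
def LocAC (g g' : ℝ → ℝ) : Prop :=
  ∀ a b : ℝ, 0 < a → a ≤ b →
    IntervalIntegrable g' volume a b ∧ g b - g a = ∫ t in a..b, g' t

/-- The integrand of the `γ = ∞` reduced energy functional
`I(u) = ∫₀^∞ [2 u'² + (1−u²)²/r² + αβ u²] dr`. -/
def uIntegrand (α β : ℝ) (u u' : ℝ → ℝ) (r : ℝ) : ℝ :=
  2 * u' r ^ 2 + (1 - u r ^ 2) ^ 2 / r ^ 2 + α * β * u r ^ 2

/-- The `γ = ∞` reduced energy `I(u)`. -/
def uEnergy (α β : ℝ) (u u' : ℝ → ℝ) : ℝ :=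
  ∫ r in Ioi (0 : ℝ), uIntegrand α β u u' r

/-- The admissible class for the `γ = ∞` problem. -/
def uAdm (α β : ℝ) (u u' : ℝ → ℝ) : Prop :=
  LocAC u u' ∧ IntegrableOn (uIntegrand α β u u') (Ioi 0) ∧
    Tendsto u (𝓝[>] (0 : ℝ)) (𝓝 1) ∧ Tendsto u atTop (𝓝 0)

theorem locAC_continuousAt {g g' : ℝ → ℝ} (h : LocAC g g') {r : ℝ} (hr : 0 < r) :
    ContinuousAt g r := by
  have h2 : 0 < r / 2 := by linarith
  have hint : IntervalIntegrable g' volume (r/2) (r+1) := (h (r/2) (r+1) h2 (by linarith)).1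
  have hIcc : IntegrableOn g' (uIcc (r/2) (r+1)) volume := by
    rwa [uIcc_of_le (by linarith), ← intervalIntegrable_iff_integrableOn_Icc_of_le (by linarith)]
  have hcont : ContinuousOn (fun x => g (r/2) + ∫ t in (r/2)..x, g' t) (uIcc (r/2) (r+1)) :=
    continuousOn_const.add (intervalIntegral.continuousOn_primitive_interval hIcc)
  rw [uIcc_of_le (by linarith)] at hcont
  have hmem : Icc (r/2) (r+1) ∈ 𝓝 r := Icc_mem_nhds (by linarith) (by linarith)
  have heq : ∀ x ∈ Icc (r/2) (r+1), g x = g (r/2) + ∫ t in (r/2)..x, g' t := by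
    intro x hx
    have := (h (r/2) x h2 hx.1).2
    linarith [this]
  have : ContinuousAt (fun x => g (r/2) + ∫ t in (r/2)..x, g' t) r :=
    hcont.continuousAt hmem
  apply this.congr
  filter_upwards [hmem] with x hx
  exact (heq x hx).symm

theorem locAC_of_c1 {g g' : ℝ → ℝ} (hg : ∀ r : ℝ, 0 < r → HasDerivAt g (g' r) r)
    (hg' : ContinuousOn g' (Ioi 0)) : LocAC g g' := by
  intro a b ha hab
  have hsub : uIcc a b ⊆ Ioi 0 := by
    rw [uIcc_of_le hab]
    exact fun x hx => lt_of_lt_of_le ha hx.1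
  have hint : IntervalIntegrable g' volume a b := (hg'.mono hsub).intervalIntegrable
  exact ⟨hint, (intervalIntegral.integral_eq_sub_of_hasDerivAt
      (fun x hx => hg x (hsub hx)) hint).symm⟩

theorem locAC_sub {F F' G G' : ℝ → ℝ} (hF : LocAC F F') (hG : LocAC G G') :
    LocAC (fun r => F r - G r) (fun r => F' r - G' r) := by
  intro a b ha hab
  obtain ⟨hFi, hFe⟩ := hF a b ha hab
  obtain ⟨hGi, hGe⟩ := hG a b ha hab
  refine ⟨hFi.sub hGi, ?_⟩
  rw [intervalIntegral.integral_sub hFi hGi]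
  beta_reduce
  linarith

theorem locAC_congr {F F' G G' : ℝ → ℝ} (h : LocAC F F') (hFG : ∀ x, F x = G x)
    (hFG' : ∀ x, F' x = G' x) : LocAC G G' := by
  have h1 : F = G := funext hFG
  have h2 : F' = G' := funext hFG'
  rwa [h1, h2] at h

theorem locAC_mul {F F' G G' : ℝ → ℝ} (hF : LocAC F F') (hG : LocAC G G') :
    LocAC (fun r => F r * G r) (fun r => F' r * G r + F r * G' r) := by
  intro a b ha hab
  -- continuity and bounds
  have hFc : ContinuousOn F (Icc a b) := fun x hx =>
    (locAC_continuousAt hF (lt_of_lt_of_le ha hx.1)).continuousWithinAt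
  have hGc : ContinuousOn G (Icc a b) := fun x hx =>
    (locAC_continuousAt hG (lt_of_lt_of_le ha hx.1)).continuousWithinAt
  obtain ⟨CF, hCF⟩ := isCompact_Icc.exists_bound_of_continuousOn hFc
  obtain ⟨CG, hCG⟩ := isCompact_Icc.exists_bound_of_continuousOn hGc
  have hF' : IntegrableOn F' (Ioc a b) volume :=
    (intervalIntegrable_iff_integrableOn_Ioc_of_le hab).1 (hF a b ha hab).1
  have hG' : IntegrableOn G' (Ioc a b) volume :=
    (intervalIntegrable_iff_integrableOn_Ioc_of_le hab).1 (hG a b ha hab).1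
  have hFm : AEStronglyMeasurable F (volume.restrict (Ioc a b)) :=
    (hFc.mono Ioc_subset_Icc_self).aestronglyMeasurable measurableSet_Ioc
  have hGm : AEStronglyMeasurable G (volume.restrict (Ioc a b)) :=
    (hGc.mono Ioc_subset_Icc_self).aestronglyMeasurable measurableSet_Ioc
  -- integrability of F' * G and F * G'
  have hF'G : IntegrableOn (fun s => F' s * G s) (Ioc a b) volume := by
    refine Integrable.mono' (hF'.abs.const_mul CG) (hF'.aestronglyMeasurable.mul hGm) ?_
    filter_upwards [ae_restrict_mem measurableSet_Ioc] with s hs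
    have h1 : |G s| ≤ CG := by
      have := hCG s (Ioc_subset_Icc_self hs); simpa using this
    have h2 : (0:ℝ) ≤ |F' s| := abs_nonneg _
    calc ‖F' s * G s‖ = |F' s| * |G s| := by rw [Real.norm_eq_abs, abs_mul]
      _ ≤ |F' s| * CG := by nlinarith [abs_nonneg (G s)]
      _ = CG * |F' s| := by ring
  have hFG' : IntegrableOn (fun s => F s * G' s) (Ioc a b) volume := by
    refine Integrable.mono' (hG'.abs.const_mul CF) (hFm.mul hG'.aestronglyMeasurable) ?_
    filter_upwards [ae_restrict_mem measurableSet_Ioc] with s hs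
    have h1 : |F s| ≤ CF := by
      have := hCF s (Ioc_subset_Icc_self hs); simpa using this
    calc ‖F s * G' s‖ = |F s| * |G' s| := by rw [Real.norm_eq_abs, abs_mul]
      _ ≤ CF * |G' s| := by nlinarith [abs_nonneg (G' s), abs_nonneg (F s)]
  refine ⟨(intervalIntegrable_iff_integrableOn_Ioc_of_le hab).2 (hF'G.add hFG'), ?_⟩
  -- Fubini trick
  set ν := volume.restrict (Ioc a b) with hν
  set Φ : ℝ × ℝ → ℝ := {p : ℝ × ℝ | p.1 < p.2}.indicator (fun p => F' p.1 * G' p.2) with hΦdef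
  have hmeaslt : MeasurableSet {p : ℝ × ℝ | p.1 < p.2} :=
    measurableSet_lt measurable_fst measurable_snd
  have hΦint : Integrable Φ (ν.prod ν) := (Integrable.mul_prod hF' hG').indicator hmeaslt
  have hswap : (∫ s, (∫ t, Φ (s, t) ∂ν) ∂ν) = ∫ t, (∫ s, Φ (s, t) ∂ν) ∂ν := by
    have := MeasureTheory.integral_integral_swap (f := fun s t => Φ (s, t))
      (μ := ν) (ν := ν) ?_
    · exact this
    · exact hΦint
  -- evaluate left side
  have hleft : (∫ s, (∫ t, Φ (s, t) ∂ν) ∂ν) = ∫ s in Ioc a b, F' s * (G b - G s) := by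
    refine setIntegral_congr_fun measurableSet_Ioc (fun s hs => ?_)
    have hinner : (fun t => Φ (s, t)) = (Ioi s).indicator (fun t => F' s * G' t) := by
      funext t
      simp only [hΦdef, Set.indicator_apply, Set.mem_setOf_eq, Set.mem_Ioi]
    rw [hinner, integral_indicator measurableSet_Ioi, hν,
      Measure.restrict_restrict measurableSet_Ioi]
    have hset : Ioi s ∩ Ioc a b = Ioc s b := by
      ext t
      simp only [mem_inter_iff, mem_Ioi, mem_Ioc]
      constructor
      · rintro ⟨h1, _, h3⟩; exact ⟨h1, h3⟩
      · rintro ⟨h1, h2⟩; exact ⟨h1, hs.1.trans h1, h2⟩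
    rw [hset, MeasureTheory.integral_const_mul]
    have hFTC := (hG s b (ha.trans hs.1) hs.2).2
    rw [intervalIntegral.integral_of_le hs.2] at hFTC
    rw [← hFTC]
  -- evaluate right side
  have hright : (∫ t, (∫ s, Φ (s, t) ∂ν) ∂ν) = ∫ t in Ioc a b, (F t - F a) * G' t := by
    refine setIntegral_congr_fun measurableSet_Ioc (fun t ht => ?_)
    have hinner : (fun s => Φ (s, t)) = (Iio t).indicator (fun s => F' s * G' t) := by
      funext s
      simp only [hΦdef, Set.indicator_apply, Set.mem_setOf_eq, Set.mem_Iio]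
    rw [hinner, integral_indicator measurableSet_Iio, hν,
      Measure.restrict_restrict measurableSet_Iio]
    have hset : Iio t ∩ Ioc a b = Ioo a t := by
      ext s
      simp only [mem_inter_iff, mem_Iio, mem_Ioc, mem_Ioo]
      constructor
      · rintro ⟨h1, h2, _⟩; exact ⟨h2, h1⟩
      · rintro ⟨h1, h2⟩; exact ⟨h2, h1, (h2.le.trans ht.2)⟩
    rw [hset, MeasureTheory.integral_mul_const, ← integral_Ioc_eq_integral_Ioo]
    have hFTC := (hF a t ha (ht.1.le)).2
    rw [intervalIntegral.integral_of_le ht.1.le] at hFTC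
    rw [← hFTC]
  -- expand both sides
  have hFb : (∫ s in Ioc a b, F' s) = F b - F a := by
    have := (hF a b ha hab).2
    rw [intervalIntegral.integral_of_le hab] at this
    linarith
  have hGb : (∫ s in Ioc a b, G' s) = G b - G a := by
    have := (hG a b ha hab).2
    rw [intervalIntegral.integral_of_le hab] at this
    linarith
  have hexp1 : (∫ s in Ioc a b, F' s * (G b - G s))
      = (F b - F a) * G b - ∫ s in Ioc a b, F' s * G s := by
    have h1 : (fun s => F' s * (G b - G s)) = fun s => G b * F' s - F' s * G s := by
      funext s; ring
    rw [h1, integral_sub (hF'.const_mul (G b)) hF'G, MeasureTheory.integral_const_mul, hFb]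
    ring
  have hexp2 : (∫ t in Ioc a b, (F t - F a) * G' t)
      = (∫ t in Ioc a b, F t * G' t) - F a * (G b - G a) := by
    have h1 : (fun t => (F t - F a) * G' t) = fun t => F t * G' t - F a * G' t := by
      funext t; ring
    rw [h1, integral_sub hFG' (hG'.const_mul (F a)), MeasureTheory.integral_const_mul, hGb]
  rw [hleft, hright, hexp1, hexp2] at hswap
  rw [intervalIntegral.integral_of_le hab,
    integral_add hF'G hFG']
  beta_reduce
  linear_combination hswap

section SolFacts

open Real

variable {α β : ℝ} {u u' : ℝ → ℝ}

/-- helper: positive derivative at a point gives larger values of the derivative function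
just to the right (applied to `u'` whose derivative is positive). -/
theorem deriv_pos_right {f' : ℝ → ℝ} {x D : ℝ} (hf : HasDerivAt f' D x) (hfx : f' x = 0)
    (hD : 0 < D) : ∃ ε > 0, ∀ y, x < y → y < x + ε → 0 < f' y := by
  have h1 : Tendsto (slope f' x) (𝓝[≠] x) (𝓝 D) := hasDerivAt_iff_tendsto_slope.1 hf
  have h2 : Tendsto (slope f' x) (𝓝[>] x) (𝓝 D) :=
    h1.mono_left (nhdsWithin_mono _ (fun y hy => ne_of_gt hy))
  have h3 : ∀ᶠ y in 𝓝[>] x, 0 < slope f' x y := h2.eventually_const_lt hD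
  rw [eventually_nhdsWithin_iff, Metric.eventually_nhds_iff] at h3
  obtain ⟨ε, hε0, hε⟩ := h3
  refine ⟨ε, hε0, fun y hy1 hy2 => ?_⟩
  have hd : dist y x < ε := by
    rw [Real.dist_eq, abs_of_pos (by linarith)]; linarith
  have := hε hd hy1
  rw [slope_def_field, hfx, sub_zero] at this
  have hyx : 0 < y - x := by linarith
  calc (0:ℝ) = 0 * (y - x) := by ring
    _ < f' y / (y - x) * (y - x) := by
        apply mul_lt_mul_of_pos_right this hyx
    _ = f' y := by field_simp

theorem sol_le_one (hα : 0 < α) (hβ : 0 < β)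
    (hode : ∀ r : ℝ, 0 < r → HasDerivAt u (u' r) r ∧
      HasDerivAt u' (α * β / 2 * u r + u r * (u r ^ 2 - 1) / r ^ 2) r)
    (h0 : Tendsto u (𝓝[>] (0:ℝ)) (𝓝 1)) (hinf : Tendsto u atTop (𝓝 0)) :
    ∀ r : ℝ, 0 < r → u r ≤ 1 := by
  by_contra hcon
  push_neg at hcon
  obtain ⟨r₁, hr₁, hur₁⟩ := hcon
  set c := u r₁ with hc_def
  have hc : 1 < c := hur₁
  have h1 : ∀ᶠ r in 𝓝[>] (0:ℝ), u r < (1 + c)/2 := h0.eventually_lt_const (by linarith)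
  rw [eventually_nhdsWithin_iff, Metric.eventually_nhds_iff] at h1
  obtain ⟨δ, hδ0, hδ⟩ := h1
  have h2 : ∀ᶠ r in atTop, u r < (1 + c)/2 := hinf.eventually_lt_const (by linarith)
  obtain ⟨T, hT⟩ := eventually_atTop.1 h2
  set a := min (δ/2) (r₁/2) with ha_def
  set b := max T (r₁ + 1) with hb_def
  have ha0 : 0 < a := lt_min (by linarith) (by linarith)
  have har₁ : a < r₁ := lt_of_le_of_lt (min_le_right _ _) (by linarith)
  have hbr₁ : r₁ < b := lt_of_lt_of_le (by linarith) (le_max_right _ _)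
  have hab : a < b := har₁.trans hbr₁
  have hua : u a < (1 + c)/2 := by
    refine hδ ?_ (lt_min (by linarith) (by linarith) : (0:ℝ) < a)
    rw [Real.dist_eq, sub_zero, abs_of_pos ha0]
    calc a ≤ δ/2 := min_le_left _ _
      _ < δ := by linarith
  have hub : u b < (1 + c)/2 := hT b (le_max_left _ _)
  have hcontu : ContinuousOn u (Icc a b) := fun x hx =>
    ((hode x (lt_of_lt_of_le ha0 hx.1)).1.continuousAt).continuousWithinAt
  obtain ⟨r₀, hr₀mem, hr₀max⟩ := isCompact_Icc.exists_isMaxOn (nonempty_Icc.2 hab.le) hcontu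
  have hr₀pos : 0 < r₀ := lt_of_lt_of_le ha0 hr₀mem.1
  have hc_le : c ≤ u r₀ := hr₀max ⟨har₁.le, hbr₁.le⟩
  have hr₀a : a < r₀ := by
    rcases lt_or_eq_of_le hr₀mem.1 with h | h
    · exact h
    · exfalso; rw [h] at hua; linarith
  have hr₀b : r₀ < b := by
    rcases lt_or_eq_of_le hr₀mem.2 with h | h
    · exact h
    · exfalso; rw [← h] at hub; linarith
  have hmax : IsLocalMax u r₀ := hr₀max.isLocalMax (Icc_mem_nhds hr₀a hr₀b)
  have hd0 : u' r₀ = 0 := hmax.hasDerivAt_eq_zero (hode r₀ hr₀pos).1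
  have hD : 0 < α * β / 2 * u r₀ + u r₀ * (u r₀ ^ 2 - 1) / r₀ ^ 2 := by
    have h1 : (1:ℝ) < u r₀ := lt_of_lt_of_le hc hc_le
    have hr2 : 0 < r₀ ^ 2 := pow_pos hr₀pos 2
    have h2 : 0 < u r₀ * (u r₀ ^ 2 - 1) := mul_pos (by linarith) (by nlinarith)
    have h3 : 0 < u r₀ * (u r₀ ^ 2 - 1) / r₀ ^ 2 := div_pos h2 hr2
    have h4 : 0 < α * β / 2 * u r₀ := by nlinarith [mul_pos hα hβ]
    linarith
  obtain ⟨ε, hε0, hε⟩ := deriv_pos_right (hode r₀ hr₀pos).2 hd0 hD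
  set y₁ := min (r₀ + ε/2) ((r₀ + b)/2) with hy₁_def
  have hy₁1 : r₀ < y₁ := lt_min (by linarith) (by linarith)
  have hy₁2 : y₁ < b := lt_of_le_of_lt (min_le_right _ _) (by linarith)
  have hy₁3 : y₁ < r₀ + ε := lt_of_le_of_lt (min_le_left _ _) (by linarith)
  have hcont2 : ContinuousOn u (Icc r₀ y₁) := by
    apply hcontu.mono
    intro x hx
    exact ⟨le_trans hr₀mem.1 hx.1, le_trans hx.2 hy₁2.le⟩
  obtain ⟨ξ, hξ, hslopeξ⟩ := exists_hasDerivAt_eq_slope u u' hy₁1 hcont2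
    (fun x hx => (hode x (hr₀pos.trans hx.1)).1)
  have hξpos : 0 < u' ξ := hε ξ hξ.1 (by linarith [hξ.2])
  have huy₁ : u y₁ ≤ u r₀ := hr₀max ⟨by linarith [hr₀mem.1], hy₁2.le⟩
  have : u' ξ ≤ 0 := by
    rw [hslopeξ]
    apply div_nonpos_of_nonpos_of_nonneg (by linarith) (by linarith)
  linarith

theorem sol_pos (hα : 0 < α) (hβ : 0 < β)
    (hode : ∀ r : ℝ, 0 < r → HasDerivAt u (u' r) r ∧
      HasDerivAt u' (α * β / 2 * u r + u r * (u r ^ 2 - 1) / r ^ 2) r)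
    (hnonneg : ∀ r : ℝ, 0 < r → 0 ≤ u r)
    (h0 : Tendsto u (𝓝[>] (0:ℝ)) (𝓝 1)) (hinf : Tendsto u atTop (𝓝 0)) :
    ∀ r : ℝ, 0 < r → 0 < u r := by
  have hle1 := sol_le_one hα hβ hode h0 hinf
  set m := Real.sqrt (α * β / 2) with hm_def
  have hm0 : 0 < m := Real.sqrt_pos.2 (by nlinarith [mul_pos hα hβ])
  have hm2 : m ^ 2 = α * β / 2 := Real.sq_sqrt (by positivity)
  by_contra hcon
  push_neg at hcon
  obtain ⟨r₀, hr₀pos, hur₀⟩ := hcon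
  have hur₀0 : u r₀ = 0 := le_antisymm hur₀ (hnonneg r₀ hr₀pos)
  have hmin : IsLocalMin u r₀ := by
    filter_upwards [Ioi_mem_nhds hr₀pos] with y hy
    rw [hur₀0]; exact hnonneg y hy
  have hd0 : u' r₀ = 0 := hmin.hasDerivAt_eq_zero (hode r₀ hr₀pos).1
  -- the quantity V r = (u' r - m u r) e^{m r} is antitone on (0,∞)
  set V : ℝ → ℝ := fun r => (u' r - m * u r) * Real.exp (m * r) with hV_def
  have hVd : ∀ r, 0 < r → HasDerivAt V ((u r * (u r ^ 2 - 1) / r ^ 2) * Real.exp (m * r)) r := by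
    intro r hr
    have h1 : HasDerivAt (fun s => Real.exp (m * s)) (Real.exp (m * r) * m) r := by
      simpa using ((hasDerivAt_id r).const_mul m).exp
    have h2 : HasDerivAt (fun s => u' s - m * u s)
        ((α * β / 2 * u r + u r * (u r ^ 2 - 1) / r ^ 2) - m * u' r) r :=
      (hode r hr).2.sub ((hode r hr).1.const_mul m)
    have h3 := h2.mul h1
    exact h3.congr_deriv (by rw [← hm2]; ring)
  have hVanti : AntitoneOn V (Ioi 0) := by
    apply antitoneOn_of_deriv_nonpos (convex_Ioi 0)
    · exact fun x hx => ((hVd x hx).continuousAt).continuousWithinAt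
    · rw [interior_Ioi]
      exact fun x hx => ((hVd x hx).differentiableAt).differentiableWithinAt
    · rw [interior_Ioi]
      intro x hx
      rw [(hVd x hx).deriv]
      have h1 : 0 ≤ u x := hnonneg x hx
      have h2 : u x ≤ 1 := hle1 x hx
      have h3 : u x * (u x ^ 2 - 1) ≤ 0 := by nlinarith
      have h4 : (0:ℝ) < x ^ 2 := pow_pos hx 2
      have h5 : u x * (u x ^ 2 - 1) / x ^ 2 ≤ 0 :=
        div_nonpos_of_nonpos_of_nonneg h3 h4.le
      have h6 : (0:ℝ) < Real.exp (m * x) := Real.exp_pos _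
      nlinarith
  -- hence u' ≥ m u ≥ 0 on (0, r₀], so u is monotone there, so u ≡ 0 on (0, r₀]
  have hmono : MonotoneOn u (Ioc 0 r₀) := by
    apply monotoneOn_of_deriv_nonneg (convex_Ioc 0 r₀)
    · exact fun x hx => ((hode x hx.1).1.continuousAt).continuousWithinAt
    · rw [interior_Ioc]
      exact fun x hx => ((hode x hx.1).1.differentiableAt).differentiableWithinAt
    · rw [interior_Ioc]
      intro x hx
      rw [(hode x hx.1).1.deriv]
      have hVx : V r₀ ≤ V x := hVanti hx.1 hr₀pos hx.2.le
      have hVr₀ : V r₀ = 0 := by simp only [hV_def, hur₀0, hd0]; ring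
      have h6 : (0:ℝ) < Real.exp (m * x) := Real.exp_pos _
      have h7 : 0 ≤ (u' x - m * u x) * Real.exp (m * x) := by
        rw [hVr₀] at hVx
        simpa only [hV_def] using hVx
      have h9 : 0 ≤ u x := hnonneg x hx.1
      nlinarith [mul_pos hm0 (lt_of_le_of_lt (le_refl (0:ℝ)) h6)]
  have hhalf : ∀ᶠ r in 𝓝[>] (0:ℝ), 1/2 < u r := h0.eventually_const_lt (by norm_num)
  have hball : Ioo (0:ℝ) r₀ ∈ 𝓝[>] (0:ℝ) := Ioo_mem_nhdsGT hr₀pos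
  obtain ⟨s, hs1, hs2⟩ := (hhalf.and (eventually_of_mem hball (fun x hx => hx))).exists
  have : u s ≤ u r₀ := hmono ⟨hs2.1, hs2.2.le⟩ ⟨hr₀pos, le_refl _⟩ hs2.2.le
  rw [hur₀0] at this
  linarith

end SolFacts
section Tail

variable {α β : ℝ} {u u' : ℝ → ℝ}

theorem sol_tail (hα : 0 < α) (hβ : 0 < β)
    (hode : ∀ r : ℝ, 0 < r → HasDerivAt u (u' r) r ∧
      HasDerivAt u' (α * β / 2 * u r + u r * (u r ^ 2 - 1) / r ^ 2) r)
    (hnonneg : ∀ r : ℝ, 0 < r → 0 ≤ u r)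
    (h0 : Tendsto u (𝓝[>] (0:ℝ)) (𝓝 1)) (hinf : Tendsto u atTop (𝓝 0)) :
    ∃ R : ℝ, 0 < R ∧ ∀ r : ℝ, R ≤ r →
      (u' r ≤ 0 ∧ -(Real.sqrt (α * β / 2) * u r) ≤ u' r) := by
  have hle1 := sol_le_one hα hβ hode h0 hinf
  set m := Real.sqrt (α * β / 2) with hm_def
  have hm0 : 0 < m := Real.sqrt_pos.2 (by nlinarith [mul_pos hα hβ])
  have hm2 : m ^ 2 = α * β / 2 := Real.sq_sqrt (by positivity)
  set R := 1 / m with hR_def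
  have hR0 : 0 < R := by positivity
  have h2nd : ∀ r : ℝ, R ≤ r → 0 < r := fun r h => lt_of_lt_of_le hR0 h
  -- convexity region : u'' ≥ 0 on [R, ∞)
  have hconv : ∀ x : ℝ, R ≤ x → 0 ≤ α * β / 2 * u x + u x * (u x ^ 2 - 1) / x ^ 2 := by
    intro x hx
    have hx0 : 0 < x := h2nd x hx
    have h1 : 0 ≤ u x := hnonneg x hx0
    have h2 : u x ≤ 1 := hle1 x hx0
    have hmx : 1 ≤ m * x := by
      rw [hR_def] at hx
      calc (1:ℝ) = m * (1/m) := by field_simp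
        _ ≤ m * x := by
            apply mul_le_mul_of_nonneg_left hx hm0.le
    have hx2 : (0:ℝ) < x ^ 2 := pow_pos hx0 2
    have hmx2 : 1 ≤ m ^ 2 * x ^ 2 := by nlinarith
    have hmx3 : 1 ≤ α * β / 2 * x ^ 2 := by rw [← hm2]; linarith
    have h5 : 0 ≤ α * β / 2 * x ^ 2 + u x ^ 2 - 1 := by nlinarith [sq_nonneg (u x)]
    have key : 0 ≤ u x * (α * β / 2 * x ^ 2 + u x ^ 2 - 1) := mul_nonneg h1 h5
    have heq : α * β / 2 * u x + u x * (u x ^ 2 - 1) / x ^ 2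
        = u x * (α * β / 2 * x ^ 2 + u x ^ 2 - 1) / x ^ 2 := by
      field_simp; ring
    rw [heq]
    exact div_nonneg key hx2.le
  have hu'mono : MonotoneOn u' (Ici R) := by
    apply monotoneOn_of_deriv_nonneg (convex_Ici R)
    · exact fun x hx => ((hode x (h2nd x hx)).2.continuousAt).continuousWithinAt
    · rw [interior_Ici]
      exact fun x hx => ((hode x (h2nd x hx.le)).2.differentiableAt).differentiableWithinAt
    · rw [interior_Ici]
      intro x hx
      rw [(hode x (h2nd x hx.le)).2.deriv]
      exact hconv x hx.le
  have claim1 : ∀ ρ : ℝ, R ≤ ρ → u' ρ ≤ 0 := by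
    intro ρ hρ
    by_contra hcρ
    push_neg at hcρ
    have hρ0 : 0 < ρ := h2nd ρ hρ
    have hlin : MonotoneOn (fun r => u r - u' ρ * r) (Ici ρ) := by
      apply monotoneOn_of_deriv_nonneg (convex_Ici ρ)
      · intro x hx
        have hx0 : 0 < x := lt_of_lt_of_le hρ0 hx
        exact (((hode x hx0).1.sub (by
          simpa using (hasDerivAt_id x).const_mul (u' ρ))).continuousAt).continuousWithinAt
      · rw [interior_Ici]
        intro x hx
        have hx0 : 0 < x := hρ0.trans hx
        exact (((hode x hx0).1.sub (by
          simpa using (hasDerivAt_id x).const_mul (u' ρ))).differentiableAt).differentiableWithinAt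
      · rw [interior_Ici]
        intro x hx
        have hx0 : 0 < x := hρ0.trans hx
        have hd : HasDerivAt (fun r => u r - u' ρ * r) (u' x - u' ρ) x := by
          have := (hode x hx0).1.sub ((hasDerivAt_id x).const_mul (u' ρ))
          exact this.congr_deriv (by ring)
        rw [hd.deriv]
        have := hu'mono (show ρ ∈ Ici R from hρ) (show x ∈ Ici R from le_trans hρ hx.le) hx.le
        linarith
    have hy : ρ ≤ ρ + 2 / u' ρ := by
      have hq : 0 < 2 / u' ρ := div_pos two_pos hcρ
      linarith
    have h1 := hlin (self_mem_Ici) (show ρ + 2 / u' ρ ∈ Ici ρ from hy) hy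
    simp only at h1
    have h2 : u' ρ * (ρ + 2 / u' ρ - ρ) = 2 := by
      field_simp; ring
    have h3 : u (ρ + 2 / u' ρ) ≤ 1 := hle1 _ (hρ0.trans_le hy)
    have h4 : 0 ≤ u ρ := hnonneg ρ hρ0
    nlinarith
  -- the quantity W r = (u' r + m u r) e^{-m r} is antitone and tends to 0
  set W : ℝ → ℝ := fun r => (u' r + m * u r) * Real.exp ((-m) * r) with hW_def
  have hWd : ∀ r, 0 < r →
      HasDerivAt W ((u r * (u r ^ 2 - 1) / r ^ 2) * Real.exp ((-m) * r)) r := by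
    intro r hr
    have h1 : HasDerivAt (fun s : ℝ => Real.exp ((-m) * s)) (Real.exp ((-m) * r) * (-m)) r := by
      simpa using ((hasDerivAt_id r).const_mul (-m)).exp
    have h2 : HasDerivAt (fun s => u' s + m * u s)
        ((α * β / 2 * u r + u r * (u r ^ 2 - 1) / r ^ 2) + m * u' r) r :=
      (hode r hr).2.add ((hode r hr).1.const_mul m)
    have h3 := h2.mul h1
    exact h3.congr_deriv (by rw [← hm2]; ring)
  have hWanti : AntitoneOn W (Ioi 0) := by
    apply antitoneOn_of_deriv_nonpos (convex_Ioi 0)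
    · exact fun x hx => ((hWd x hx).continuousAt).continuousWithinAt
    · rw [interior_Ioi]
      exact fun x hx => ((hWd x hx).differentiableAt).differentiableWithinAt
    · rw [interior_Ioi]
      intro x hx
      rw [(hWd x hx).deriv]
      have h1 : 0 ≤ u x := hnonneg x hx
      have h2 : u x ≤ 1 := hle1 x hx
      have h3 : u x * (u x ^ 2 - 1) ≤ 0 := by nlinarith
      have h4 : (0:ℝ) < x ^ 2 := pow_pos hx 2
      have h5 : u x * (u x ^ 2 - 1) / x ^ 2 ≤ 0 :=
        div_nonpos_of_nonpos_of_nonneg h3 h4.le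
      have h6 : (0:ℝ) < Real.exp ((-m) * x) := Real.exp_pos _
      nlinarith
  have hexp : Tendsto (fun r : ℝ => Real.exp ((-m) * r)) atTop (𝓝 0) := by
    have hmr : Tendsto (fun r : ℝ => m * r) atTop atTop :=
      Tendsto.const_mul_atTop hm0 tendsto_id
    have h1 : Tendsto (fun r : ℝ => (Real.exp (m * r))⁻¹) atTop (𝓝 0) :=
      (Real.tendsto_exp_atTop.comp hmr).inv_tendsto_atTop
    apply h1.congr
    intro r
    rw [← Real.exp_neg]
    ring_nf
  have hWto : Tendsto W atTop (𝓝 0) := by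
    apply squeeze_zero_norm' (a := fun r => (|u' R| + m) * Real.exp ((-m) * r))
    · filter_upwards [eventually_ge_atTop R] with r hr
      have hr0 : 0 < r := h2nd r hr
      have h1 : u' R ≤ u' r := hu'mono self_mem_Ici hr hr
      have h2 : u' r ≤ 0 := claim1 r hr
      have h3 : |u' r| ≤ |u' R| := by
        rw [abs_of_nonpos h2, abs_of_nonpos (claim1 R le_rfl)]; linarith
      have h4 : |u' r + m * u r| ≤ |u' R| + m := by
        calc |u' r + m * u r| ≤ |u' r| + |m * u r| := abs_add_le _ _
          _ ≤ |u' R| + m := by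
              rw [abs_mul, abs_of_pos hm0, abs_of_nonneg (hnonneg r hr0)]
              have := hle1 r hr0
              nlinarith
      simp only [hW_def]
      rw [Real.norm_eq_abs, abs_mul, abs_of_pos (Real.exp_pos _)]
      apply mul_le_mul_of_nonneg_right h4 (Real.exp_pos _).le
    · simpa using hexp.const_mul (|u' R| + m)
  have hW0 : ∀ r : ℝ, 0 < r → 0 ≤ W r := by
    intro r hr
    apply le_of_tendsto hWto
    filter_upwards [eventually_ge_atTop r] with s hs
    exact hWanti (mem_Ioi.2 hr) (mem_Ioi.2 (lt_of_lt_of_le hr hs)) hs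
  refine ⟨R, hR0, fun r hr => ⟨claim1 r hr, ?_⟩⟩
  have h1 := hW0 r (h2nd r hr)
  rw [hW_def] at h1
  simp only at h1
  nlinarith [Real.exp_pos ((-m) * r)]

end Tail

section ZeroSeq

variable {α β : ℝ}

set_option maxHeartbeats 2000000 in
theorem zero_seq_key {α β : ℝ} (hα : 0 < α) (hβ : 0 < β) {u u' w w' : ℝ → ℝ}
    (hfinu : IntegrableOn (uIntegrand α β u u') (Ioi 0))
    (hfinw : IntegrableOn (uIntegrand α β w w') (Ioi 0))
    (δ₀ : ℝ) (hδ₀0 : 0 < δ₀) (n : ℕ) :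
    ∃ x : ℝ, (0 < x ∧ x < min δ₀ (1/((n:ℝ)+1))) ∧
      |u' x| * (|1 - w x^2| + |1 - u x^2|) < 1/((n:ℝ)+1) := by
  set ε := 1/((n:ℝ)+1) with hε_def
  have hε : 0 < ε := by positivity
  set δ := min δ₀ ε with hδ_def
  have hδ : 0 < δ := lt_min hδ₀0 hε
  by_contra hcon
  push_neg at hcon
  have hcon' : ∀ x : ℝ, x ∈ Ioo (0:ℝ) δ → ε ≤ |u' x| * (|1 - w x^2| + |1 - u x^2|) :=
    fun x hx => hcon x ⟨hx.1, hx.2⟩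
  have hsub : Ioo (0:ℝ) δ ⊆ Ioi 0 := fun x hx => hx.1
  have hGint : IntegrableOn (fun r => uIntegrand α β u u' r + uIntegrand α β w w' r)
      (Ioo 0 δ) := (hfinu.mono_set hsub).add (hfinw.mono_set hsub)
  have hkey : ∀ x ∈ Ioo (0:ℝ) δ, ε / x ≤ uIntegrand α β u u' x + uIntegrand α β w w' x := by
    intro x hx
    have hx0 : 0 < x := hx.1
    have hg := hcon' x hx
    have hA : |1 - u x^2| = |(1 - u x^2)/x| * x := by
      rw [abs_div, abs_of_pos hx0]; field_simp
    have hB : |1 - w x^2| = |(1 - w x^2)/x| * x := by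
      rw [abs_div, abs_of_pos hx0]; field_simp
    rw [div_le_iff₀ hx0]
    have hA2 : (1 - u x^2)^2/x^2 = ((1 - u x^2)/x)^2 := by rw [div_pow]
    have hB2 : (1 - w x^2)^2/x^2 = ((1 - w x^2)/x)^2 := by rw [div_pow]
    have hGx : uIntegrand α β u u' x + uIntegrand α β w w' x
        = 2*u' x^2 + ((1 - u x^2)/x)^2 + α*β*u x^2
          + (2*w' x^2 + ((1 - w x^2)/x)^2 + α*β*w x^2) := by
      simp only [uIntegrand]
      rw [hA2, hB2]
    rw [hGx]
    rw [hA, hB] at hg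
    set A := (1 - u x^2)/x with hA_def
    set B := (1 - w x^2)/x with hB_def
    have s1 : |u' x| * |A| ≤ (u' x^2 + A^2)/2 := by
      nlinarith [sq_nonneg (|u' x| - |A|), sq_abs (u' x), sq_abs A]
    have s2 : |u' x| * |B| ≤ (u' x^2 + B^2)/2 := by
      nlinarith [sq_nonneg (|u' x| - |B|), sq_abs (u' x), sq_abs B]
    have hαβ : (0:ℝ) ≤ α * β := (mul_pos hα hβ).le
    have hg2 : ε ≤ x * (|u' x| * |B|) + x * (|u' x| * |A|) := by
      calc ε ≤ |u' x| * (|B| * x + |A| * x) := hg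
        _ = x * (|u' x| * |B|) + x * (|u' x| * |A|) := by ring
    have c1 : x * (|u' x| * |A|) ≤ x * ((u' x^2 + A^2)/2) :=
      mul_le_mul_of_nonneg_left s1 hx0.le
    have c2 : x * (|u' x| * |B|) ≤ x * ((u' x^2 + B^2)/2) :=
      mul_le_mul_of_nonneg_left s2 hx0.le
    have c7 : 0 ≤ u' x^2 + A^2/2 + B^2/2 + α*β*u x^2 + α*β*w x^2 + 2*w' x^2 := by
      have d1 := mul_nonneg hαβ (sq_nonneg (u x))
      have d2 := mul_nonneg hαβ (sq_nonneg (w x))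
      have d3 := sq_nonneg (u' x)
      have d4 := sq_nonneg (w' x)
      have d5 := sq_nonneg A
      have d6 := sq_nonneg B
      linarith
    have c8 : 0 ≤ x * (u' x^2 + A^2/2 + B^2/2 + α*β*u x^2 + α*β*w x^2 + 2*w' x^2) :=
      mul_nonneg hx0.le c7
    have hid : (2*u' x^2 + A^2 + α*β*u x^2 + (2*w' x^2 + B^2 + α*β*w x^2)) * x
        = x*((u' x^2 + B^2)/2) + x*((u' x^2 + A^2)/2)
          + x*(u' x^2 + A^2/2 + B^2/2 + α*β*u x^2 + α*β*w x^2 + 2*w' x^2) := by ring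
    linarith [hg2, c1, c2, c8, hid]
  have hcontr : IntegrableOn (fun x : ℝ => ε / x) (Ioo 0 δ) := by
    refine Integrable.mono' hGint ?_ ?_
    · exact ((continuousOn_const.div continuousOn_id
        (fun x hx => ne_of_gt hx.1)).aestronglyMeasurable measurableSet_Ioo)
    · filter_upwards [ae_restrict_mem measurableSet_Ioo] with x hx
      rw [Real.norm_eq_abs, abs_of_pos (div_pos hε hx.1)]
      exact hkey x hx
  have hnot : ¬ IntegrableOn (fun x : ℝ => x ^ (-1:ℝ)) (Ioo (0:ℝ) δ) := by
    rw [intervalIntegral.integrableOn_Ioo_rpow_iff hδ]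
    norm_num
  apply hnot
  have h3 : IntegrableOn (fun x : ℝ => ε⁻¹ * (ε / x)) (Ioo 0 δ) := hcontr.const_mul ε⁻¹
  refine h3.congr_fun (fun x hx => ?_) measurableSet_Ioo
  rw [Real.rpow_neg_one]
  have hx0 : x ≠ 0 := ne_of_gt hx.1
  field_simp

theorem exists_zero_seq (hα : 0 < α) (hβ : 0 < β) {u u' w w' : ℝ → ℝ}
    (hfinu : IntegrableOn (uIntegrand α β u u') (Ioi 0))
    (hfinw : IntegrableOn (uIntegrand α β w w') (Ioi 0))
    (h0u : Tendsto u (𝓝[>] (0:ℝ)) (𝓝 1)) :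
    ∃ aseq : ℕ → ℝ, (∀ n, 0 < aseq n) ∧ (∀ n : ℕ, aseq n < 1/((n:ℝ)+1)) ∧
      Tendsto aseq atTop (𝓝 0) ∧ (∀ n, 1/2 < u (aseq n)) ∧
      Tendsto (fun n => |u' (aseq n)| * (|1 - w (aseq n)^2| + |1 - u (aseq n)^2|))
        atTop (𝓝 0) := by
  have hhalf : ∀ᶠ r in 𝓝[>] (0:ℝ), 1/2 < u r := h0u.eventually_const_lt (by norm_num)
  rw [eventually_nhdsWithin_iff, Metric.eventually_nhds_iff] at hhalf
  obtain ⟨δ₀, hδ₀0, hδ₀⟩ := hhalf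
  have hhalf' : ∀ x : ℝ, 0 < x → x < δ₀ → 1/2 < u x := by
    intro x h1 h2
    refine hδ₀ ?_ h1
    rw [Real.dist_eq, sub_zero, abs_of_pos h1]; exact h2
  have key : ∀ n : ℕ, ∃ x : ℝ, (0 < x ∧ x < min δ₀ (1/((n:ℝ)+1))) ∧
      |u' x| * (|1 - w x^2| + |1 - u x^2|) < 1/((n:ℝ)+1) :=
    fun n => zero_seq_key hα hβ hfinu hfinw δ₀ hδ₀0 n
  choose aseq haseq using key
  have hpos : ∀ n, 0 < aseq n := fun n => (haseq n).1.1
  have hlt : ∀ n : ℕ, aseq n < 1/((n:ℝ)+1) :=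
    fun n => lt_of_lt_of_le (haseq n).1.2 (min_le_right _ _)
  have hltδ : ∀ n, aseq n < δ₀ :=
    fun n => lt_of_lt_of_le (haseq n).1.2 (min_le_left _ _)
  have htendsto : Tendsto aseq atTop (𝓝 0) := by
    apply squeeze_zero (fun n => (hpos n).le) (fun n => (hlt n).le)
    exact tendsto_one_div_add_atTop_nhds_zero_nat
  refine ⟨aseq, hpos, hlt, htendsto, fun n => hhalf' _ (hpos n) (hltδ n), ?_⟩
  apply squeeze_zero (g := fun n : ℕ => 1/((n:ℝ)+1))
  · intro n
    exact mul_nonneg (abs_nonneg _) (add_nonneg (abs_nonneg _) (abs_nonneg _))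
  · intro n
    exact ((haseq n).2).le
  · exact tendsto_one_div_add_atTop_nhds_zero_nat

end ZeroSeq
section Core

variable {α β : ℝ}

theorem picone_ident {ab A B C D R : ℝ} (hA : A ≠ 0) (hR : R ≠ 0) :
    (2*D^2 + (1 - C^2)^2/R^2 + ab*C^2) - (2*B^2 + (1 - A^2)^2/R^2 + ab*A^2)
      = 2*(D - B/A*C)^2 + (C^2 - A^2)^2/R^2
        + ((2*((ab/2*A + A*(A^2-1)/R^2)*A - B^2)/A^2)*(C^2-A^2)
           + (2*B/A)*(2*C*D - 2*A*B)) := by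
  field_simp
  ring

/-- auxiliary boundary function for the Picone-type comparison -/
def pQ (u u' : ℝ → ℝ) : ℝ → ℝ := fun r => 2 * u' r / u r

def pQd (α β : ℝ) (u u' : ℝ → ℝ) : ℝ → ℝ := fun r =>
  2 * ((α * β / 2 * u r + u r * (u r ^ 2 - 1) / r ^ 2) * u r - u' r ^ 2) / u r ^ 2

def pE (u u' w : ℝ → ℝ) : ℝ → ℝ := fun r => pQ u u' r * (w r ^ 2 - u r ^ 2)

def pEd (α β : ℝ) (u u' w w' : ℝ → ℝ) : ℝ → ℝ := fun r =>
  pQd α β u u' r * (w r ^ 2 - u r ^ 2) + pQ u u' r * (2 * w r * w' r - 2 * u r * u' r)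

set_option maxHeartbeats 2000000 in
theorem core_ineq (hα : 0 < α) (hβ : 0 < β) {u u' w w' : ℝ → ℝ}
    (hode : ∀ r : ℝ, 0 < r → HasDerivAt u (u' r) r ∧
      HasDerivAt u' (α * β / 2 * u r + u r * (u r ^ 2 - 1) / r ^ 2) r)
    (hnonneg : ∀ r : ℝ, 0 < r → 0 ≤ u r)
    (h0 : Tendsto u (𝓝[>] (0:ℝ)) (𝓝 1)) (hinf : Tendsto u atTop (𝓝 0))
    (hfin : IntegrableOn (uIntegrand α β u u') (Ioi 0))
    (hw : uAdm α β w w') :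
    ∀ c d : ℝ, 0 < c → c ≤ d →
      ∫ r in Ioc c d, (w r ^ 2 - u r ^ 2) ^ 2 / r ^ 2
        ≤ uEnergy α β w w' - uEnergy α β u u' := by
  obtain ⟨hwAC, hwfin, hw0, hwinf⟩ := hw
  have hupos := sol_pos hα hβ hode hnonneg h0 hinf
  obtain ⟨R, hR0, htail⟩ := sol_tail hα hβ hode hnonneg h0 hinf
  set m := Real.sqrt (α * β / 2) with hm_def
  have hm0 : 0 < m := Real.sqrt_pos.2 (by nlinarith [mul_pos hα hβ])
  have hcu : ContinuousOn u (Ioi 0) := fun x hx =>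
    ((hode x hx).1.continuousAt).continuousWithinAt
  have hcu' : ContinuousOn u' (Ioi 0) := fun x hx =>
    ((hode x hx).2.continuousAt).continuousWithinAt
  have hcw : ContinuousOn w (Ioi 0) := fun x hx =>
    (locAC_continuousAt hwAC hx).continuousWithinAt
  -- LocAC structure for the boundary function E
  have hqder : ∀ r, 0 < r → HasDerivAt (pQ u u') (pQd α β u u' r) r := by
    intro r hr
    have h1 : HasDerivAt (fun s => 2 * u' s)
        (2 * (α * β / 2 * u r + u r * (u r ^ 2 - 1) / r ^ 2)) r := (hode r hr).2.const_mul 2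
    have h2 := h1.div (hode r hr).1 (ne_of_gt (hupos r hr))
    have h3 : (2 * (α * β / 2 * u r + u r * (u r ^ 2 - 1) / r ^ 2) * u r - 2 * u' r * u' r)
        / u r ^ 2 = pQd α β u u' r := by
      simp only [pQd]
      ring
    rw [← h3]
    exact h2
  have hRHSc : ContinuousOn (fun r => α * β / 2 * u r + u r * (u r ^ 2 - 1) / r ^ 2) (Ioi 0) := by
    apply (continuousOn_const.mul hcu).add
    apply ContinuousOn.div (hcu.mul ((hcu.pow 2).sub continuousOn_const))
      ((continuous_pow 2).continuousOn)
    exact fun x hx => pow_ne_zero 2 (ne_of_gt hx)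
  have hqdc : ContinuousOn (pQd α β u u') (Ioi 0) := by
    apply ContinuousOn.div
      (continuousOn_const.mul ((hRHSc.mul hcu).sub (hcu'.pow 2))) (hcu.pow 2)
    exact fun x hx => pow_ne_zero 2 (ne_of_gt (hupos x hx))
  have hqAC : LocAC (pQ u u') (pQd α β u u') := locAC_of_c1 hqder hqdc
  have hw2 : LocAC (fun r => w r ^ 2) (fun r => 2 * w r * w' r) :=
    locAC_congr (locAC_mul hwAC hwAC) (fun x => by ring) (fun x => by ring)
  have hu2 : LocAC (fun r => u r ^ 2) (fun r => 2 * u r * u' r) := by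
    apply locAC_of_c1
    · intro r hr
      have := (hode r hr).1.pow 2
      exact this.congr_deriv (by norm_num)
    · exact (continuousOn_const.mul hcu).mul hcu'
  have hF : LocAC (fun r => w r ^ 2 - u r ^ 2) (fun r => 2 * w r * w' r - 2 * u r * u' r) :=
    locAC_sub hw2 hu2
  have hE : LocAC (pE u u' w) (pEd α β u u' w w') :=
    locAC_congr (locAC_mul hqAC hF) (fun x => rfl) (fun x => rfl)
  -- pointwise Picone identity
  have hpt : ∀ r, 0 < r → uIntegrand α β w w' r - uIntegrand α β u u' r
      = 2 * (w' r - u' r / u r * w r) ^ 2 + (w r ^ 2 - u r ^ 2) ^ 2 / r ^ 2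
        + pEd α β u u' w w' r := by
    intro r hr
    have h := picone_ident (ab := α * β) (A := u r) (B := u' r) (C := w r) (D := w' r)
      (R := r) (ne_of_gt (hupos r hr)) (ne_of_gt hr)
    simp only [uIntegrand, pEd, pQd, pQ]
    linarith [h]
  intro c d hc hcd
  -- main inequality on finite intervals
  have main : ∀ a b : ℝ, 0 < a → a ≤ c → d ≤ b →
      ∫ r in Ioc c d, (w r ^ 2 - u r ^ 2) ^ 2 / r ^ 2
        ≤ (∫ r in Ioc a b, uIntegrand α β w w' r)
          - (∫ r in Ioc a b, uIntegrand α β u u' r)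
          - pE u u' w b + pE u u' w a := by
    intro a b ha hac hdb
    have hab : a ≤ b := hac.trans (hcd.trans hdb)
    have hsubI : Ioc a b ⊆ Ioi 0 := fun x hx => ha.trans hx.1
    have hIw : IntegrableOn (uIntegrand α β w w') (Ioc a b) := hwfin.mono_set hsubI
    have hIu : IntegrableOn (uIntegrand α β u u') (Ioc a b) := hfin.mono_set hsubI
    have hEdint : IntegrableOn (pEd α β u u' w w') (Ioc a b) :=
      (intervalIntegrable_iff_integrableOn_Ioc_of_le hab).1 (hE a b ha hab).1
    have hFTC : ∫ r in Ioc a b, pEd α β u u' w w' r = pE u u' w b - pE u u' w a := by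
      have h := (hE a b ha hab).2
      rw [intervalIntegral.integral_of_le hab] at h
      linarith
    have hWU : IntegrableOn (fun r => uIntegrand α β w w' r - uIntegrand α β u u' r)
        (Ioc a b) := hIw.sub hIu
    have hS : IntegrableOn
        (fun r => uIntegrand α β w w' r - uIntegrand α β u u' r - pEd α β u u' w w' r)
        (Ioc a b) := hWU.sub hEdint
    have hT : IntegrableOn (fun r => (w r ^ 2 - u r ^ 2) ^ 2 / r ^ 2) (Ioc a b) := by
      refine Integrable.mono' hS ?_ ?_
      · refine (ContinuousOn.aestronglyMeasurable ?_ measurableSet_Ioc)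
        apply ContinuousOn.div
          ((((hcw.mono hsubI).pow 2).sub ((hcu.mono hsubI).pow 2)).pow 2)
          ((continuous_pow 2).continuousOn)
        exact fun x hx => pow_ne_zero 2 (ne_of_gt (ha.trans hx.1))
      · filter_upwards [ae_restrict_mem measurableSet_Ioc] with x hx
        have h0x : 0 < x := ha.trans hx.1
        have h := hpt x h0x
        rw [Real.norm_eq_abs, abs_of_nonneg (by positivity)]
        nlinarith [sq_nonneg (w' x - u' x / u x * w x)]
    have step1 : ∫ r in Ioc c d, (w r ^ 2 - u r ^ 2) ^ 2 / r ^ 2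
        ≤ ∫ r in Ioc a b, (w r ^ 2 - u r ^ 2) ^ 2 / r ^ 2 := by
      apply setIntegral_mono_set hT
      · exact Eventually.of_forall (fun x => by positivity)
      · exact (Ioc_subset_Ioc hac hdb).eventuallyLE
    have step2 : ∫ r in Ioc a b, (w r ^ 2 - u r ^ 2) ^ 2 / r ^ 2
        ≤ ∫ r in Ioc a b,
            (uIntegrand α β w w' r - uIntegrand α β u u' r - pEd α β u u' w w' r) := by
      apply setIntegral_mono_on hT hS measurableSet_Ioc
      intro x hx
      have h0x : 0 < x := ha.trans hx.1
      have h := hpt x h0x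
      nlinarith [sq_nonneg (w' x - u' x / u x * w x)]
    have step3 : ∫ r in Ioc a b,
        (uIntegrand α β w w' r - uIntegrand α β u u' r - pEd α β u u' w w' r)
        = (∫ r in Ioc a b, uIntegrand α β w w' r)
          - (∫ r in Ioc a b, uIntegrand α β u u' r)
          - (pE u u' w b - pE u u' w a) := by
      rw [integral_sub hWU hEdint, integral_sub hIw hIu, hFTC]
    linarith
  -- sequences
  obtain ⟨aseq, hapos, halt, hato, hahalf, hagto⟩ :=
    exists_zero_seq hα hβ hfin hwfin h0
  set bseq : ℕ → ℝ := fun n => (n : ℝ) + (max d R + 1) with hbseq_def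
  have hbto : Tendsto bseq atTop atTop :=
    tendsto_atTop_add_const_right atTop _ tendsto_natCast_atTop_atTop
  have hbd : ∀ n, d ≤ bseq n := by
    intro n
    have h1 : (0:ℝ) ≤ (n:ℝ) := Nat.cast_nonneg n
    have h2 : d ≤ max d R := le_max_left _ _
    simp only [hbseq_def]
    linarith
  have hbR : ∀ n, R ≤ bseq n := by
    intro n
    have h1 : (0:ℝ) ≤ (n:ℝ) := Nat.cast_nonneg n
    have h2 : R ≤ max d R := le_max_right _ _
    simp only [hbseq_def]
    linarith
  have hbpos : ∀ n, 0 < bseq n := fun n => lt_of_lt_of_le hR0 (hbR n)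
  -- the eventual inequality
  have hev : ∀ᶠ n in atTop,
      ∫ r in Ioc c d, (w r ^ 2 - u r ^ 2) ^ 2 / r ^ 2
        ≤ uEnergy α β w w'
          - (∫ r in Ioc (aseq n) (bseq n), uIntegrand α β u u' r)
          - pE u u' w (bseq n) + pE u u' w (aseq n) := by
    filter_upwards [hato.eventually_lt_const hc] with n han
    have h1 := main (aseq n) (bseq n) (hapos n) han.le (hbd n)
    have hsubI : Ioc (aseq n) (bseq n) ⊆ Ioi 0 := fun x hx => (hapos n).trans hx.1
    have h2 : ∫ r in Ioc (aseq n) (bseq n), uIntegrand α β w w' r ≤ uEnergy α β w w' := by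
      rw [uEnergy]
      apply setIntegral_mono_set hwfin
      · filter_upwards [ae_restrict_mem measurableSet_Ioi] with x hx
        simp only [uIntegrand]
        have : 0 < x := hx
        positivity
      · exact hsubI.eventuallyLE
    linarith
  -- limits
  have hYu : Tendsto (fun n => ∫ r in Ioc (aseq n) (bseq n), uIntegrand α β u u' r)
      atTop (𝓝 (uEnergy α β u u')) := by
    have hDCT := tendsto_integral_of_dominated_convergence
      (μ := volume.restrict (Ioi 0))
      (F := fun n => (Ioc (aseq n) (bseq n)).indicator (uIntegrand α β u u'))
      (f := uIntegrand α β u u') (bound := uIntegrand α β u u')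
      (fun n => hfin.aestronglyMeasurable.indicator measurableSet_Ioc)
      hfin ?_ ?_
    · have heq : ∀ n, ∫ r, (Ioc (aseq n) (bseq n)).indicator (uIntegrand α β u u') r
          ∂(volume.restrict (Ioi 0))
          = ∫ r in Ioc (aseq n) (bseq n), uIntegrand α β u u' r := by
        intro n
        have hinter : Ioc (aseq n) (bseq n) ∩ Ioi (0:ℝ) = Ioc (aseq n) (bseq n) :=
          inter_eq_self_of_subset_left (fun x hx => (hapos n).trans hx.1)
        rw [integral_indicator measurableSet_Ioc, Measure.restrict_restrict measurableSet_Ioc,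
          hinter]
      rw [uEnergy] at *
      exact hDCT.congr heq
    · intro n
      filter_upwards [ae_restrict_mem measurableSet_Ioi] with x hx
      by_cases hmem : x ∈ Ioc (aseq n) (bseq n)
      · rw [indicator_of_mem hmem]
        rw [Real.norm_eq_abs, abs_of_nonneg]
        simp only [uIntegrand]
        have : 0 < x := hx
        positivity
      · rw [indicator_of_notMem hmem]
        simp only [norm_zero, uIntegrand]
        have : 0 < x := hx
        positivity
    · filter_upwards [ae_restrict_mem measurableSet_Ioi] with x hx
      have hx0 : (0:ℝ) < x := hx
      have hev2 : ∀ᶠ n in atTop, x ∈ Ioc (aseq n) (bseq n) := by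
        filter_upwards [hato.eventually_lt_const hx0, hbto.eventually_ge_atTop x]
          with n h1 h2
        exact ⟨h1, h2⟩
      apply Tendsto.congr' _ tendsto_const_nhds
      filter_upwards [hev2] with n hn
      rw [indicator_of_mem hn]
  have hEb : Tendsto (fun n => pE u u' w (bseq n)) atTop (𝓝 0) := by
    apply squeeze_zero_norm' (a := fun n => 2 * m * (w (bseq n) ^ 2 + u (bseq n) ^ 2))
    · apply Eventually.of_forall
      intro n
      have hr : R ≤ bseq n := hbR n
      have hrpos : 0 < bseq n := hbpos n
      obtain ⟨ht1, ht2⟩ := htail (bseq n) hr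
      have hup : 0 < u (bseq n) := hupos _ hrpos
      have e1 : |2 * u' (bseq n) / u (bseq n)| ≤ 2 * m := by
        rw [abs_div, abs_of_pos hup, div_le_iff₀ hup]
        rw [abs_mul]
        have : |u' (bseq n)| ≤ m * u (bseq n) := by
          rw [abs_le]
          constructor
          · rw [hm_def] at ht2 ⊢; linarith
          · have := mul_nonneg hm0.le hup.le
            linarith
        rw [abs_of_nonneg (by norm_num : (0:ℝ) ≤ 2)]
        nlinarith
      have e2 : |w (bseq n) ^ 2 - u (bseq n) ^ 2| ≤ w (bseq n) ^ 2 + u (bseq n) ^ 2 := by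
        calc |w (bseq n) ^ 2 - u (bseq n) ^ 2| ≤ |w (bseq n) ^ 2| + |u (bseq n) ^ 2| :=
              abs_sub _ _
          _ = w (bseq n) ^ 2 + u (bseq n) ^ 2 := by
              rw [abs_of_nonneg (sq_nonneg _), abs_of_nonneg (sq_nonneg _)]
      simp only [pE, pQ]
      rw [Real.norm_eq_abs, abs_mul]
      apply mul_le_mul e1 e2 (abs_nonneg _) (by positivity)
    · have hwc : Tendsto (fun n => w (bseq n)) atTop (𝓝 0) := hwinf.comp hbto
      have huc : Tendsto (fun n => u (bseq n)) atTop (𝓝 0) := hinf.comp hbto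
      have := ((hwc.pow 2).add (huc.pow 2)).const_mul (2 * m)
      simpa using this
  have hEa : Tendsto (fun n => pE u u' w (aseq n)) atTop (𝓝 0) := by
    apply squeeze_zero_norm'
      (a := fun n => 4 * (|u' (aseq n)| * (|1 - w (aseq n) ^ 2| + |1 - u (aseq n) ^ 2|)))
    · apply Eventually.of_forall
      intro n
      have hup : 0 < u (aseq n) := hupos _ (hapos n)
      have hhalf := hahalf n
      have e1 : |2 * u' (aseq n) / u (aseq n)| ≤ 4 * |u' (aseq n)| := by
        rw [abs_div, abs_of_pos hup, div_le_iff₀ hup, abs_mul,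
          abs_of_nonneg (by norm_num : (0:ℝ) ≤ 2)]
        nlinarith [abs_nonneg (u' (aseq n))]
      have e2 : |w (aseq n) ^ 2 - u (aseq n) ^ 2|
          ≤ |1 - w (aseq n) ^ 2| + |1 - u (aseq n) ^ 2| := by
        calc |w (aseq n) ^ 2 - u (aseq n) ^ 2|
            = |(1 - u (aseq n) ^ 2) - (1 - w (aseq n) ^ 2)| := by ring_nf
          _ ≤ |1 - u (aseq n) ^ 2| + |1 - w (aseq n) ^ 2| := abs_sub _ _
          _ = |1 - w (aseq n) ^ 2| + |1 - u (aseq n) ^ 2| := by ring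
      simp only [pE, pQ]
      rw [Real.norm_eq_abs, abs_mul]
      calc |2 * u' (aseq n) / u (aseq n)| * |w (aseq n) ^ 2 - u (aseq n) ^ 2|
          ≤ (4 * |u' (aseq n)|) * (|1 - w (aseq n) ^ 2| + |1 - u (aseq n) ^ 2|) := by
            apply mul_le_mul e1 e2 (abs_nonneg _) (by positivity)
        _ = 4 * (|u' (aseq n)| * (|1 - w (aseq n) ^ 2| + |1 - u (aseq n) ^ 2|)) := by ring
    · have := hagto.const_mul 4
      simpa using this
  -- conclude
  have hY : Tendsto (fun n => uEnergy α β w w'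
      - (∫ r in Ioc (aseq n) (bseq n), uIntegrand α β u u' r)
      - pE u u' w (bseq n) + pE u u' w (aseq n)) atTop
      (𝓝 (uEnergy α β w w' - uEnergy α β u u')) := by
    have := (((tendsto_const_nhds (x := uEnergy α β w w') (f := atTop)).sub hYu).sub hEb).add hEa
    simpa using this
  exact ge_of_tendsto hY hev

end Core
section Final

variable {α β : ℝ}

theorem sq_eq_on {v u : ℝ → ℝ} (hcv : ∀ x : ℝ, 0 < x → ContinuousAt v x)
    (hcu : ∀ x : ℝ, 0 < x → ContinuousAt u x)
    (hle : ∀ c d : ℝ, 0 < c → c ≤ d →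
      ∫ r in Ioc c d, (v r ^ 2 - u r ^ 2) ^ 2 / r ^ 2 ≤ 0) :
    ∀ r : ℝ, 0 < r → v r ^ 2 = u r ^ 2 := by
  intro r hr
  by_contra hne
  set T : ℝ → ℝ := fun x => (v x ^ 2 - u x ^ 2) ^ 2 / x ^ 2 with hT_def
  have hTr : 0 < T r := by
    have h6 : v r ^ 2 - u r ^ 2 ≠ 0 := sub_ne_zero.2 hne
    have h5 : 0 < (v r ^ 2 - u r ^ 2) ^ 2 :=
      lt_of_le_of_ne (sq_nonneg _) (Ne.symm (pow_ne_zero 2 h6))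
    exact div_pos h5 (pow_pos hr 2)
  have hTc : ∀ x : ℝ, 0 < x → ContinuousAt T x := by
    intro x hx
    exact ContinuousAt.div ((((hcv x hx).pow 2).sub ((hcu x hx).pow 2)).pow 2)
      ((continuous_pow 2).continuousAt) (ne_of_gt (pow_pos hx 2))
  have hev : ∀ᶠ y in 𝓝 r, T r / 2 < T y ∧ 0 < y :=
    (((hTc r hr).eventually_const_lt (by linarith)).and (eventually_gt_nhds hr))
  rw [Metric.eventually_nhds_iff] at hev
  obtain ⟨ε, hε0, hε⟩ := hev
  set c := max (r - ε / 2) (r / 2) with hc_def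
  set d := r + ε / 2 with hd_def
  have hc0 : 0 < c := lt_of_lt_of_le (by linarith) (le_max_right _ _)
  have hcd : c < d := by
    apply max_lt <;> (simp only [hd_def]; linarith)
  have hmem : ∀ y ∈ Ioc c d, T r / 2 < T y ∧ 0 < y := by
    intro y hy
    apply hε
    rw [Real.dist_eq, abs_lt]
    have h1 : r - ε / 2 ≤ c := le_max_left _ _
    have h2 : y ≤ r + ε / 2 := hy.2
    have h3 : r - ε / 2 < y := lt_of_le_of_lt h1 hy.1
    constructor <;> linarith
  have hTint : IntegrableOn T (Ioc c d) := by
    have hconOn : ContinuousOn T (Icc c d) := fun x hx =>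
      (hTc x (lt_of_lt_of_le hc0 hx.1)).continuousWithinAt
    exact (hconOn.integrableOn_Icc).mono_set Ioc_subset_Icc_self
  have hlow : T r / 2 * (d - c) ≤ ∫ x in Ioc c d, T x := by
    have h1 : ∫ _x in Ioc c d, (T r / 2) ≤ ∫ x in Ioc c d, T x := by
      apply setIntegral_mono_on
        (integrableOn_const (by rw [Real.volume_Ioc]; exact ENNReal.ofReal_ne_top))
        hTint measurableSet_Ioc
      exact fun x hx => (hmem x hx).1.le
    rwa [setIntegral_const, Real.volume_real_Ioc_of_le (by linarith),
      smul_eq_mul, mul_comm] at h1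
  have hup := hle c d hc0 hcd.le
  nlinarith [mul_pos (show (0:ℝ) < T r / 2 by linarith) (show (0:ℝ) < d - c by linarith)]

theorem sol_uAdm {u u' : ℝ → ℝ}
    (hode : ∀ r : ℝ, 0 < r → HasDerivAt u (u' r) r ∧
      HasDerivAt u' (α * β / 2 * u r + u r * (u r ^ 2 - 1) / r ^ 2) r)
    (h0 : Tendsto u (𝓝[>] (0:ℝ)) (𝓝 1)) (hinf : Tendsto u atTop (𝓝 0))
    (hfin : IntegrableOn (uIntegrand α β u u') (Ioi 0)) : uAdm α β u u' :=
  ⟨locAC_of_c1 (fun r hr => (hode r hr).1)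
    (fun x hx => ((hode x hx).2.continuousAt).continuousWithinAt), hfin, h0, hinf⟩

theorem sol_unique (hα : 0 < α) (hβ : 0 < β) {u₁ u₁' u₂ u₂' : ℝ → ℝ}
    (hode₁ : ∀ r : ℝ, 0 < r → HasDerivAt u₁ (u₁' r) r ∧
      HasDerivAt u₁' (α * β / 2 * u₁ r + u₁ r * (u₁ r ^ 2 - 1) / r ^ 2) r)
    (hode₂ : ∀ r : ℝ, 0 < r → HasDerivAt u₂ (u₂' r) r ∧
      HasDerivAt u₂' (α * β / 2 * u₂ r + u₂ r * (u₂ r ^ 2 - 1) / r ^ 2) r)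
    (hnonneg₁ : ∀ r : ℝ, 0 < r → 0 ≤ u₁ r) (hnonneg₂ : ∀ r : ℝ, 0 < r → 0 ≤ u₂ r)
    (h₁0 : Tendsto u₁ (𝓝[>] (0:ℝ)) (𝓝 1)) (h₁inf : Tendsto u₁ atTop (𝓝 0))
    (h₂0 : Tendsto u₂ (𝓝[>] (0:ℝ)) (𝓝 1)) (h₂inf : Tendsto u₂ atTop (𝓝 0))
    (hfin₁ : IntegrableOn (uIntegrand α β u₁ u₁') (Ioi 0))
    (hfin₂ : IntegrableOn (uIntegrand α β u₂ u₂') (Ioi 0)) :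
    ∀ r : ℝ, 0 < r → u₁ r = u₂ r := by
  have hadm₁ : uAdm α β u₁ u₁' := sol_uAdm hode₁ h₁0 h₁inf hfin₁
  have hadm₂ : uAdm α β u₂ u₂' := sol_uAdm hode₂ h₂0 h₂inf hfin₂
  have h12 := core_ineq hα hβ hode₁ hnonneg₁ h₁0 h₁inf hfin₁ hadm₂
  have h21 := core_ineq hα hβ hode₂ hnonneg₂ h₂0 h₂inf hfin₂ hadm₁
  have hsq : ∀ r : ℝ, 0 < r → u₂ r ^ 2 = u₁ r ^ 2 := by
    apply sq_eq_on (fun x hx => (hode₂ x hx).1.continuousAt)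
      (fun x hx => (hode₁ x hx).1.continuousAt)
    intro c d hc hcd
    have ha := h12 c d hc hcd
    have hb := h21 c d hc hcd
    have he : ∫ r in Ioc c d, (u₁ r ^ 2 - u₂ r ^ 2) ^ 2 / r ^ 2
        = ∫ r in Ioc c d, (u₂ r ^ 2 - u₁ r ^ 2) ^ 2 / r ^ 2 := by
      apply setIntegral_congr_fun measurableSet_Ioc
      intro x _
      ring
    rw [he] at hb
    linarith
  intro r hr
  have h := hsq r hr
  have h3 : (u₂ r - u₁ r) * (u₂ r + u₁ r) = 0 := by linear_combination h
  have h1 := hnonneg₁ r hr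
  have h2 := hnonneg₂ r hr
  rcases mul_eq_zero.1 h3 with h4 | h4
  · linarith
  · linarith

theorem minimizer_eq_sol (hα : 0 < α) (hβ : 0 < β) {u u' : ℝ → ℝ}
    (hode : ∀ r : ℝ, 0 < r → HasDerivAt u (u' r) r ∧
      HasDerivAt u' (α * β / 2 * u r + u r * (u r ^ 2 - 1) / r ^ 2) r)
    (hnonneg : ∀ r : ℝ, 0 < r → 0 ≤ u r)
    (h0 : Tendsto u (𝓝[>] (0:ℝ)) (𝓝 1)) (hinf : Tendsto u atTop (𝓝 0))
    (hfin : IntegrableOn (uIntegrand α β u u') (Ioi 0))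
    {v v' : ℝ → ℝ} (hv : uAdm α β v v')
    (hmin : ∀ w w' : ℝ → ℝ, uAdm α β w w' → uEnergy α β v v' ≤ uEnergy α β w w') :
    ∀ r : ℝ, 0 < r → v r = u r := by
  have hadm : uAdm α β u u' := sol_uAdm hode h0 hinf hfin
  have hle : uEnergy α β v v' ≤ uEnergy α β u u' := hmin _ _ hadm
  have hcore := core_ineq hα hβ hode hnonneg h0 hinf hfin hv
  have hpos := sol_pos hα hβ hode hnonneg h0 hinf
  have hsq : ∀ r : ℝ, 0 < r → v r ^ 2 = u r ^ 2 := by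
    apply sq_eq_on (fun x hx => locAC_continuousAt hv.1 hx)
      (fun x hx => (hode x hx).1.continuousAt)
    intro c d hc hcd
    have := hcore c d hc hcd
    linarith
  intro r hr
  have h := hsq r hr
  have h3 : (v r - u r) * (v r + u r) = 0 := by linear_combination h
  rcases mul_eq_zero.1 h3 with h4 | h4
  · linarith
  · exfalso
    have hur : 0 < u r := hpos r hr
    have hvr : v r < 0 := by linarith
    have hev : ∀ᶠ s in 𝓝[>] (0:ℝ), 1/2 < v s ∧ s ∈ Ioo (0:ℝ) r :=
      (hv.2.2.1.eventually_const_lt (by norm_num)).and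
        (eventually_of_mem (Ioo_mem_nhdsGT hr) (fun x hx => hx))
    obtain ⟨s, hs1, hs2⟩ := hev.exists
    have hs0 : 0 < s := hs2.1
    have hsr : s ≤ r := hs2.2.le
    have hvc : ContinuousOn v (Icc s r) := fun x hx =>
      (locAC_continuousAt hv.1 (lt_of_lt_of_le hs0 hx.1)).continuousWithinAt
    have hIVT := intermediate_value_Icc' hsr hvc
    have h0mem : (0:ℝ) ∈ Icc (v r) (v s) := ⟨hvr.le, by linarith⟩
    obtain ⟨z, hzmem, hvz⟩ := hIVT h0mem
    have hz0 : 0 < z := lt_of_lt_of_le hs0 hzmem.1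
    have hzz := hsq z hz0
    rw [hvz] at hzz
    nlinarith [hpos z hz0]

end Final

/-- uniqueness for the `γ = ∞` problem: two nonnegative
finite-energy solutions coincide on `(0,∞)`; in particular the energy has a
unique minimizer subject to the boundary conditions. -/
theorem gamma_infty_uniqueness (α β : ℝ) (hα : 0 < α) (hβ : 0 < β)
    (u₁ u₁' u₂ u₂' : ℝ → ℝ)
    (hode₁ : ∀ r : ℝ, 0 < r →
      HasDerivAt u₁ (u₁' r) r ∧
      HasDerivAt u₁' (α * β / 2 * u₁ r + u₁ r * (u₁ r ^ 2 - 1) / r ^ 2) r)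
    (hode₂ : ∀ r : ℝ, 0 < r →
      HasDerivAt u₂ (u₂' r) r ∧
      HasDerivAt u₂' (α * β / 2 * u₂ r + u₂ r * (u₂ r ^ 2 - 1) / r ^ 2) r)
    (hnonneg₁ : ∀ r : ℝ, 0 < r → 0 ≤ u₁ r)
    (hnonneg₂ : ∀ r : ℝ, 0 < r → 0 ≤ u₂ r)
    (h₁0 : Tendsto u₁ (𝓝[>] (0 : ℝ)) (𝓝 1))
    (h₁inf : Tendsto u₁ atTop (𝓝 0))
    (h₂0 : Tendsto u₂ (𝓝[>] (0 : ℝ)) (𝓝 1))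
    (h₂inf : Tendsto u₂ atTop (𝓝 0))
    (hfin₁ : IntegrableOn (uIntegrand α β u₁ u₁') (Ioi 0))
    (hfin₂ : IntegrableOn (uIntegrand α β u₂ u₂') (Ioi 0)) :
    (∀ r : ℝ, 0 < r → u₁ r = u₂ r) ∧
      (∀ v₁ v₁' v₂ v₂' : ℝ → ℝ, uAdm α β v₁ v₁' → uAdm α β v₂ v₂' →
        (∀ w w' : ℝ → ℝ, uAdm α β w w' → uEnergy α β v₁ v₁' ≤ uEnergy α β w w') →
        (∀ w w' : ℝ → ℝ, uAdm α β w w' → uEnergy α β v₂ v₂' ≤ uEnergy α β w w') →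
        ∀ r : ℝ, 0 < r → v₁ r = v₂ r) := by
  constructor
  · exact sol_unique hα hβ hode₁ hode₂ hnonneg₁ hnonneg₂ h₁0 h₁inf h₂0 h₂inf hfin₁ hfin₂
  · intro v₁ v₁' v₂ v₂' hv₁ hv₂ hmin₁ hmin₂ r hr
    rw [minimizer_eq_sol hα hβ hode₁ hnonneg₁ h₁0 h₁inf hfin₁ hv₁ hmin₁ r hr,
      minimizer_eq_sol hα hβ hode₁ hnonneg₁ h₁0 h₁inf hfin₁ hv₂ hmin₂ r hr]
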